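/- In the Lie algebra gr_*(P(r,n)) presented as in Theorem 3.3 of Cohen (with generators Z_k for 1 ≤ k ≤ n and B_{i,j}^{(p)} for 1 ≤ i < j ≤ n, 1 ≤ p ≤ r, and relations: [Z_j + Z_l + Σ_p B_{j,l}^{(p)}, Y] = 0 for Y ∈ {Z_l, B_{j,l}^{(p)}}; [B_{i,j}^{(p)} + B_{i,k}^{(q)} + B_{j,k}^{(m)}, Y] = 0 for Y ∈ {B_{i,k}^{(q)}, B_{j,k}^{(m)}} with q ≡ p+m mod r; [B_{i,j}^{(p)}, B_{k,l}^{(q)}] = 0 for {i,j} ∩ {k,l} = ∅; [Z_k, B_{i,j}^{(p)}] = 0 for k ∉ {i,j}), the element Δ(r,n) = Σ_{k=1}^n Z_k + Σ_{p=1}^r Σ_{1≤i<j≤n} B_{i,j}^{(p)} is central: it commutes with every generator. -/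
import Mathlib


open Finset

lemma my_sum_lie {L : Type*} [LieRing L] {ι : Type*} (s : Finset ι) (f : ι → L) (y : L) :
    ⁅∑ i ∈ s, f i, y⁆ = ∑ i ∈ s, ⁅f i, y⁆ := by
  induction s using Finset.cons_induction with
  | empty => simp
  | cons a s ha ih => simp [Finset.sum_cons, add_lie, ih]

lemma my_lie_sum {L : Type*} [LieRing L] {ι : Type*} (s : Finset ι) (f : ι → L) (y : L) :
    ⁅y, ∑ i ∈ s, f i⁆ = ∑ i ∈ s, ⁅y, f i⁆ := by
  induction s using Finset.cons_induction with
  | empty => simp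
  | cons a s ha ih => simp [Finset.sum_cons, lie_add, ih]

/-- In the Lie algebra `gr₊(P(r,n))` of the fundamental group of the cyclic orbit
configuration space, presented by generators `Z k` (`1 ≤ k ≤ n`) and `B i j p`
(`1 ≤ i < j ≤ n`, `p ∈ ℤ/rℤ`) with the relations of Theorem 3.3 below, the element
`Δ(r,n) = Σₖ Z k + Σₚ Σ_{i<j} B i j p` is central: it commutes with every
generator. -/
theorem monomial_Delta_central (r n : ℕ) [NeZero r]
    (L : Type*) [LieRing L] [LieAlgebra ℤ L]
    (Z : Fin n → L) (B : Fin n → Fin n → ZMod r → L)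
    -- [Z_j + Z_l + Σ_p B_{j,l}^{(p)}, Y] = 0 for Y = Z_l and Y = B_{j,l}^{(p)}
    (hrel1a : ∀ j l : Fin n, j < l →
      ⁅Z j + Z l + ∑ p : ZMod r, B j l p, Z l⁆ = 0)
    (hrel1b : ∀ (j l : Fin n) (p : ZMod r), j < l →
      ⁅Z j + Z l + ∑ q : ZMod r, B j l q, B j l p⁆ = 0)
    -- [B_{i,j}^{(p)} + B_{i,k}^{(q)} + B_{j,k}^{(m)}, Y] = 0 for Y = B_{i,k}^{(q)},
    -- B_{j,k}^{(m)}, with q ≡ p + m mod r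
    (hrel2a : ∀ (i j k : Fin n) (p m : ZMod r), i < j → j < k →
      ⁅B i j p + B i k (p + m) + B j k m, B i k (p + m)⁆ = 0)
    (hrel2b : ∀ (i j k : Fin n) (p m : ZMod r), i < j → j < k →
      ⁅B i j p + B i k (p + m) + B j k m, B j k m⁆ = 0)
    -- [B_{i,j}^{(p)}, B_{k,l}^{(q)}] = 0 for {i,j} ∩ {k,l} = ∅
    (hrel3 : ∀ (i j k l : Fin n) (p q : ZMod r), i < j → k < l →
      i ≠ k → i ≠ l → j ≠ k → j ≠ l → ⁅B i j p, B k l q⁆ = 0)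
    -- [Z_k, B_{i,j}^{(p)}] = 0 for k ∉ {i,j}
    (hrel4 : ∀ (k i j : Fin n) (p : ZMod r), i < j → k ≠ i → k ≠ j →
      ⁅Z k, B i j p⁆ = 0) :
    (∀ k : Fin n,
      ⁅(∑ l, Z l) + ∑ i, ∑ j ∈ univ.filter (fun j => i < j), ∑ p : ZMod r, B i j p,
        Z k⁆ = 0) ∧
    (∀ (s t : Fin n) (p : ZMod r), s < t →
      ⁅(∑ l, Z l) + ∑ i, ∑ j ∈ univ.filter (fun j => i < j), ∑ q : ZMod r, B i j q,
        B s t p⁆ = 0) := by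
  classical
  -- derived relation: the "triangle" element of relation 1 also commutes with `Z j`
  have D1 : ∀ j l : Fin n, j < l →
      ⁅Z j + Z l + ∑ q : ZMod r, B j l q, Z j⁆ = 0 := by
    intro j l hjl
    have hB : ⁅Z j + Z l + ∑ q : ZMod r, B j l q, ∑ q : ZMod r, B j l q⁆ = 0 := by
      rw [my_lie_sum]
      exact Finset.sum_eq_zero fun q _ => hrel1b j l q hjl
    have h2 := lie_self (Z j + Z l + ∑ q : ZMod r, B j l q)
    rw [lie_add, lie_add, hrel1a j l hjl, hB] at h2
    simpa using h2
  -- derived relation: the "triangle" element of relation 2 also commutes with `B i j p`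
  have D2 : ∀ (i j k : Fin n) (p m : ZMod r), i < j → j < k →
      ⁅B i j p + B i k (p + m) + B j k m, B i j p⁆ = 0 := by
    intro i j k p m hij hjk
    have h2 := lie_self (B i j p + B i k (p + m) + B j k m)
    rw [lie_add, lie_add, hrel2a i j k p m hij hjk, hrel2b i j k p m hij hjk] at h2
    simpa using h2
  -- generic three-way splitting of a sum over `Fin n`
  have split3 : ∀ (a : Fin n) (f : Fin n → L),
      ∑ l, f l = (∑ l ∈ univ.filter (fun l => l < a), f l) + f a
        + ∑ l ∈ univ.filter (fun l => a < l), f l := by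
    intro a f
    have h1 := Finset.sum_filter_add_sum_filter_not univ (fun l => l < a) f
    have h2 : univ.filter (fun l : Fin n => ¬ l < a)
        = insert a (univ.filter (fun l => a < l)) := by
      ext x
      simp only [Finset.mem_filter, Finset.mem_univ, true_and, Finset.mem_insert,
        Fin.lt_def, Fin.ext_iff, not_lt]
      omega
    rw [← h1, h2, Finset.sum_insert (by simp)]
    abel
  constructor
  · -- Part 1: Δ commutes with each Z k
    intro k
    have Fzero : ∀ i j : Fin n, i < j → k ≠ i → k ≠ j →
        (∑ p : ZMod r, ⁅B i j p, Z k⁆) = 0 :=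
      fun i j hij hki hkj => Finset.sum_eq_zero fun p _ => by
        rw [← lie_skew, hrel4 k i j p hij hki hkj, neg_zero]
    have Plt : ∀ l : Fin n, l < k →
        ⁅Z l, Z k⁆ + ∑ p : ZMod r, ⁅B l k p, Z k⁆ = 0 := by
      intro l hlk
      have h := hrel1a l k hlk
      rw [add_lie, add_lie, lie_self, my_sum_lie] at h
      simpa using h
    have Pgt : ∀ l : Fin n, k < l →
        ⁅Z l, Z k⁆ + ∑ p : ZMod r, ⁅B k l p, Z k⁆ = 0 := by
      intro l hkl
      have h := D1 k l hkl
      rw [add_lie, add_lie, lie_self, my_sum_lie] at h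
      simpa using h
    rw [add_lie, my_sum_lie, my_sum_lie]
    simp only [my_sum_lie]
    -- name inner sums
    rw [split3 k (fun l => ⁅Z l, Z k⁆),
        split3 k (fun i => ∑ j ∈ univ.filter (fun j => i < j), ∑ p : ZMod r, ⁅B i j p, Z k⁆)]
    have e1 : ∀ i ∈ univ.filter (fun i : Fin n => i < k),
        (∑ j ∈ univ.filter (fun j => i < j), ∑ p : ZMod r, ⁅B i j p, Z k⁆)
          = ∑ p : ZMod r, ⁅B i k p, Z k⁆ := by
      intro i hi
      have hik : i < k := by simpa using hi
      exact Finset.sum_eq_single_of_mem k (by simpa using hik)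
        (fun j hj hjk => Fzero i j (by simpa using hj) (ne_of_gt hik) (Ne.symm hjk))
    have e3 : ∀ i ∈ univ.filter (fun i : Fin n => k < i),
        (∑ j ∈ univ.filter (fun j => i < j), ∑ p : ZMod r, ⁅B i j p, Z k⁆) = 0 := by
      intro i hi
      have hki : k < i := by simpa using hi
      exact Finset.sum_eq_zero fun j hj =>
        Fzero i j (by simpa using hj) (ne_of_lt hki)
          (ne_of_lt (hki.trans (by simpa using hj)))
    rw [Finset.sum_congr rfl e1, Finset.sum_congr rfl e3, Finset.sum_const_zero,
      lie_self]
    have hA : (∑ l ∈ univ.filter (fun l : Fin n => l < k), ⁅Z l, Z k⁆)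
        + (∑ i ∈ univ.filter (fun i : Fin n => i < k), ∑ p : ZMod r, ⁅B i k p, Z k⁆) = 0 := by
      rw [← Finset.sum_add_distrib]
      exact Finset.sum_eq_zero fun l hl => Plt l (by simpa using hl)
    have hB : (∑ l ∈ univ.filter (fun l : Fin n => k < l), ⁅Z l, Z k⁆)
        + (∑ j ∈ univ.filter (fun j : Fin n => k < j), ∑ p : ZMod r, ⁅B k j p, Z k⁆) = 0 := by
      rw [← Finset.sum_add_distrib]
      exact Finset.sum_eq_zero fun l hl => Pgt l (by simpa using hl)
    calc _ = ((∑ l ∈ univ.filter (fun l : Fin n => l < k), ⁅Z l, Z k⁆)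
            + (∑ i ∈ univ.filter (fun i : Fin n => i < k), ∑ p : ZMod r, ⁅B i k p, Z k⁆))
          + ((∑ l ∈ univ.filter (fun l : Fin n => k < l), ⁅Z l, Z k⁆)
            + (∑ j ∈ univ.filter (fun j : Fin n => k < j), ∑ p : ZMod r, ⁅B k j p, Z k⁆)) := by
          abel
      _ = 0 := by rw [hA, hB, add_zero]
  · -- Part 2: Δ commutes with each B s t p
    intro s t p hst
    set Y := B s t p with hY
    have Gzero : ∀ i j : Fin n, i < j → i ≠ s → i ≠ t → j ≠ s → j ≠ t →
        (∑ q : ZMod r, ⁅B i j q, Y⁆) = 0 :=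
      fun i j hij h1 h2 h3 h4 => Finset.sum_eq_zero fun q _ =>
        hrel3 i j s t q p hij hst h1 h2 h3 h4
    -- Triple identities
    have T1 : ∀ k : Fin n, k < s →
        (∑ q : ZMod r, ⁅B k s q, Y⁆) + (∑ q : ZMod r, ⁅B k t q, Y⁆) = 0 := by
      intro k hks
      have key : ∀ q : ZMod r, ⁅B k s q, Y⁆ + ⁅B k t (q + p), Y⁆ = 0 := by
        intro q
        have h := hrel2b k s t q p hks hst
        rw [add_lie, add_lie, ← hY, lie_self] at h
        simpa using h
      have hsum : (∑ q : ZMod r, (⁅B k s q, Y⁆ + ⁅B k t (q + p), Y⁆)) = 0 :=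
        Finset.sum_eq_zero fun q _ => key q
      rw [Finset.sum_add_distrib,
        Fintype.sum_equiv (Equiv.addRight p) (fun q => ⁅B k t (q + p), Y⁆)
          (fun q => ⁅B k t q, Y⁆) (fun q => rfl)] at hsum
      exact hsum
    have T2 : ∀ k : Fin n, s < k → k < t →
        (∑ q : ZMod r, ⁅B s k q, Y⁆) + (∑ q : ZMod r, ⁅B k t q, Y⁆) = 0 := by
      intro k hsk hkt
      have key : ∀ q : ZMod r, ⁅B s k q, Y⁆ + ⁅B k t (p - q), Y⁆ = 0 := by
        intro q
        have h := hrel2a s k t q (p - q) hsk hkt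
        rw [show q + (p - q) = p from by ring] at h
        rw [add_lie, add_lie, ← hY, lie_self] at h
        simpa using h
      have hsum : (∑ q : ZMod r, (⁅B s k q, Y⁆ + ⁅B k t (p - q), Y⁆)) = 0 :=
        Finset.sum_eq_zero fun q _ => key q
      rw [Finset.sum_add_distrib,
        Fintype.sum_equiv (Equiv.subLeft p) (fun q => ⁅B k t (p - q), Y⁆)
          (fun q => ⁅B k t q, Y⁆) (fun q => rfl)] at hsum
      exact hsum
    have T3 : ∀ k : Fin n, t < k →
        (∑ q : ZMod r, ⁅B s k q, Y⁆) + (∑ q : ZMod r, ⁅B t k q, Y⁆) = 0 := by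
      intro k htk
      have key : ∀ m : ZMod r, ⁅B s k (p + m), Y⁆ + ⁅B t k m, Y⁆ = 0 := by
        intro m
        have h := D2 s t k p m hst htk
        rw [add_lie, add_lie, ← hY, lie_self] at h
        simpa using h
      have hsum : (∑ m : ZMod r, (⁅B s k (p + m), Y⁆ + ⁅B t k m, Y⁆)) = 0 :=
        Finset.sum_eq_zero fun m _ => key m
      rw [Finset.sum_add_distrib,
        Fintype.sum_equiv (Equiv.addLeft p) (fun m => ⁅B s k (p + m), Y⁆)
          (fun q => ⁅B s k q, Y⁆) (fun m => rfl)] at hsum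
      exact hsum
    -- the (s,t) triangle
    have Gst : ⁅Z s, Y⁆ + ⁅Z t, Y⁆ + (∑ q : ZMod r, ⁅B s t q, Y⁆) = 0 := by
      have h := hrel1b s t p hst
      rw [add_lie, add_lie, my_sum_lie] at h
      exact h
    -- the Z-part of the sum
    have hZ : (∑ l, ⁅Z l, Y⁆) = ⁅Z s, Y⁆ + ⁅Z t, Y⁆ := by
      refine ((Finset.sum_subset (Finset.subset_univ {s, t}) ?_).symm.trans
        (Finset.sum_pair (ne_of_lt hst)))
      intro x _ hx
      simp only [Finset.mem_insert, Finset.mem_singleton, not_or] at hx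
      exact hrel4 x s t p hst hx.1 hx.2
    rw [add_lie, my_sum_lie, my_sum_lie]
    simp only [my_sum_lie]
    rw [hZ, split3 s (fun i => ∑ j ∈ univ.filter (fun j => i < j), ∑ q : ZMod r, ⁅B i j q, Y⁆)]
    -- region A : i < s
    have eA : ∀ i ∈ univ.filter (fun i : Fin n => i < s),
        (∑ j ∈ univ.filter (fun j => i < j), ∑ q : ZMod r, ⁅B i j q, Y⁆)
          = (∑ q : ZMod r, ⁅B i s q, Y⁆) + (∑ q : ZMod r, ⁅B i t q, Y⁆) := by
      intro i hi
      have his : i < s := by simpa using hi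
      have hsub : ({s, t} : Finset (Fin n)) ⊆ univ.filter (fun j => i < j) := by
        intro x hx
        simp only [Finset.mem_insert, Finset.mem_singleton] at hx
        rcases hx with rfl | rfl
        · simpa using his
        · simpa using his.trans hst
      refine ((Finset.sum_subset hsub ?_).symm.trans (Finset.sum_pair (ne_of_lt hst)))
      intro j hj hjn
      simp only [Finset.mem_insert, Finset.mem_singleton, not_or] at hjn
      exact Gzero i j (by simpa using hj) (ne_of_lt his) (ne_of_lt (his.trans hst))
        hjn.1 hjn.2
    -- region B : s < i < t, inner sum
    have eB : ∀ i ∈ univ.filter (fun i : Fin n => s < i ∧ i < t),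
        (∑ j ∈ univ.filter (fun j => i < j), ∑ q : ZMod r, ⁅B i j q, Y⁆)
          = ∑ q : ZMod r, ⁅B i t q, Y⁆ := by
      intro i hi
      obtain ⟨hsi, hit⟩ : s < i ∧ i < t := by simpa using hi
      exact Finset.sum_eq_single_of_mem t (by simpa using hit)
        (fun j hj hjt => Gzero i j (by simpa using hj) (ne_of_gt hsi) (ne_of_lt hit)
          (ne_of_gt (hsi.trans (by simpa using hj))) hjt)
    -- region C : t < i, inner sum is zero
    have eC : ∀ i ∈ univ.filter (fun i : Fin n => t < i),
        (∑ j ∈ univ.filter (fun j => i < j), ∑ q : ZMod r, ⁅B i j q, Y⁆) = 0 := by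
      intro i hi
      have hti : t < i := by simpa using hi
      exact Finset.sum_eq_zero fun j hj =>
        Gzero i j (by simpa using hj) (ne_of_gt (hst.trans hti)) (ne_of_gt hti)
          (ne_of_gt ((hst.trans hti).trans (by simpa using hj)))
          (ne_of_gt (hti.trans (by simpa using hj)))
    -- split the i = s inner sum at t, and all i > s at t
    have splitS : (∑ j ∈ univ.filter (fun j : Fin n => s < j), ∑ q : ZMod r, ⁅B s j q, Y⁆)
        = (∑ j ∈ univ.filter (fun j : Fin n => s < j ∧ j < t), ∑ q : ZMod r, ⁅B s j q, Y⁆)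
          + (∑ q : ZMod r, ⁅B s t q, Y⁆)
          + ∑ j ∈ univ.filter (fun j : Fin n => t < j), ∑ q : ZMod r, ⁅B s j q, Y⁆ := by
      have h1 := Finset.sum_filter_add_sum_filter_not (univ.filter (fun j : Fin n => s < j))
        (fun j => j < t) (fun j => ∑ q : ZMod r, ⁅B s j q, Y⁆)
      rw [Finset.filter_filter, Finset.filter_filter] at h1
      have h2 : univ.filter (fun j : Fin n => s < j ∧ ¬ j < t)
          = insert t (univ.filter (fun j : Fin n => t < j)) := by
        ext x
        simp only [Finset.mem_filter, Finset.mem_univ, true_and, Finset.mem_insert,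
          Fin.lt_def, Fin.ext_iff, not_lt]
        omega
      rw [h2, Finset.sum_insert (by simp)] at h1
      rw [← h1]
      abel
    -- split the filter (s < ·) sum of inner sums at t
    have splitGT : (∑ i ∈ univ.filter (fun i : Fin n => s < i),
          ∑ j ∈ univ.filter (fun j => i < j), ∑ q : ZMod r, ⁅B i j q, Y⁆)
        = (∑ i ∈ univ.filter (fun i : Fin n => s < i ∧ i < t),
            ∑ j ∈ univ.filter (fun j => i < j), ∑ q : ZMod r, ⁅B i j q, Y⁆)
          + (∑ j ∈ univ.filter (fun j : Fin n => t < j), ∑ q : ZMod r, ⁅B t j q, Y⁆)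
          + ∑ i ∈ univ.filter (fun i : Fin n => t < i),
              ∑ j ∈ univ.filter (fun j => i < j), ∑ q : ZMod r, ⁅B i j q, Y⁆ := by
      have h1 := Finset.sum_filter_add_sum_filter_not (univ.filter (fun i : Fin n => s < i))
        (fun i => i < t)
        (fun i => ∑ j ∈ univ.filter (fun j => i < j), ∑ q : ZMod r, ⁅B i j q, Y⁆)
      rw [Finset.filter_filter, Finset.filter_filter] at h1
      have h2 : univ.filter (fun i : Fin n => s < i ∧ ¬ i < t)
          = insert t (univ.filter (fun i : Fin n => t < i)) := by
        ext x
        simp only [Finset.mem_filter, Finset.mem_univ, true_and, Finset.mem_insert,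
          Fin.lt_def, Fin.ext_iff, not_lt]
        omega
      rw [h2, Finset.sum_insert (by simp)] at h1
      rw [← h1]
      abel
    rw [splitGT, splitS, Finset.sum_congr rfl eA, Finset.sum_congr rfl eB,
      Finset.sum_congr rfl eC, Finset.sum_const_zero]
    -- now combine all the pieces
    have hA : (∑ i ∈ univ.filter (fun i : Fin n => i < s),
        ((∑ q : ZMod r, ⁅B i s q, Y⁆) + (∑ q : ZMod r, ⁅B i t q, Y⁆))) = 0 :=
      Finset.sum_eq_zero fun i hi => T1 i (by simpa using hi)
    have hBsum : (∑ i ∈ univ.filter (fun i : Fin n => s < i ∧ i < t),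
          ∑ q : ZMod r, ⁅B s i q, Y⁆)
        + (∑ i ∈ univ.filter (fun i : Fin n => s < i ∧ i < t),
          ∑ q : ZMod r, ⁅B i t q, Y⁆) = 0 := by
      rw [← Finset.sum_add_distrib]
      refine Finset.sum_eq_zero fun i hi => ?_
      obtain ⟨h1, h2⟩ : s < i ∧ i < t := by simpa using hi
      exact T2 i h1 h2
    have hCsum : (∑ j ∈ univ.filter (fun j : Fin n => t < j),
          ∑ q : ZMod r, ⁅B s j q, Y⁆)
        + (∑ j ∈ univ.filter (fun j : Fin n => t < j),
          ∑ q : ZMod r, ⁅B t j q, Y⁆) = 0 := by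
      rw [← Finset.sum_add_distrib]
      exact Finset.sum_eq_zero fun j hj => T3 j (by simpa using hj)
    calc _
        = (⁅Z s, Y⁆ + ⁅Z t, Y⁆ + (∑ q : ZMod r, ⁅B s t q, Y⁆))
          + (∑ i ∈ univ.filter (fun i : Fin n => i < s),
              ((∑ q : ZMod r, ⁅B i s q, Y⁆) + (∑ q : ZMod r, ⁅B i t q, Y⁆)))
          + ((∑ j ∈ univ.filter (fun j : Fin n => s < j ∧ j < t),
              ∑ q : ZMod r, ⁅B s j q, Y⁆)
            + (∑ i ∈ univ.filter (fun i : Fin n => s < i ∧ i < t),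
              ∑ q : ZMod r, ⁅B i t q, Y⁆))
          + ((∑ j ∈ univ.filter (fun j : Fin n => t < j), ∑ q : ZMod r, ⁅B s j q, Y⁆)
            + (∑ j ∈ univ.filter (fun j : Fin n => t < j), ∑ q : ZMod r, ⁅B t j q, Y⁆)) := by
          abel
      _ = 0 := by rw [Gst, hA, hBsum, hCsum]; simp
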